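/- The generating function identity E_μ((x/2)(t − 1/t)) = Σ_{n=−∞}^{∞} J_n^μ(x) t^n holds, where J_{−n}^μ := (−1)^n J_n^μ for n ≥ 1. -/

import Mathlib

/-- The deformed integer `[n]_μ = n + μ (1 - (-1)^n)`. -/
noncomputable def dIdx (μ : ℝ) (n : ℕ) : ℝ := n + μ * (1 - (-1 : ℝ) ^ n)

/-- The deformed factorial `[n]_μ!`. -/
noncomputable def dFact (μ : ℝ) : ℕ → ℝ
  | 0 => 1
  | n + 1 => dIdx μ (n + 1) * dFact μ n

/-- The deformed exponential `E_μ(x) = Σ_{m≥0} x^m / [m]_μ!`. -/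
noncomputable def Emu (μ : ℝ) (x : ℝ) : ℝ := ∑' m : ℕ, x ^ m / dFact μ m

/-- The deformed Bessel function `J_n^μ` for `n ≥ 0`. -/
noncomputable def Jmu (μ : ℝ) (n : ℕ) (x : ℝ) : ℝ :=
  ∑' k : ℕ, (-1 : ℝ) ^ k * (Nat.factorial (2 * k + n)) /
      ((Nat.factorial k) * (Nat.factorial (k + n)) * dFact μ (2 * k + n)) *
    (x / 2) ^ (2 * k + n)

/-- `J_n^μ` for `n ∈ ℤ`, with `J_{-n}^μ = (-1)^n J_n^μ`. -/
noncomputable def JmuZ (μ : ℝ) (n : ℤ) (x : ℝ) : ℝ :=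
  if 0 ≤ n then Jmu μ n.toNat x else (-1 : ℝ) ^ (-n).toNat * Jmu μ (-n).toNat x

lemma factorial_le_dFact (μ : ℝ) (hμ : 0 ≤ μ) (n : ℕ) :
    (Nat.factorial n : ℝ) ≤ dFact μ n := by
  induction n with
  | zero => simp [dFact]
  | succ n ih =>
    have h1 : ((n + 1 : ℕ) : ℝ) ≤ dIdx μ (n + 1) := by
      have : (0:ℝ) ≤ μ * (1 - (-1 : ℝ) ^ (n+1)) := by
        apply mul_nonneg hμ
        rcases neg_one_pow_eq_one_iff_even (R := ℝ) (by norm_num) |>.symm with _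
        rcases Nat.even_or_odd (n+1) with h | h
        · rw [h.neg_one_pow]; norm_num
        · rw [h.neg_one_pow]; norm_num
      simp only [dIdx]
      push_cast
      linarith
    have hf : (0:ℝ) ≤ (Nat.factorial n : ℝ) := by positivity
    calc (Nat.factorial (n+1) : ℝ) = ((n+1 : ℕ) : ℝ) * Nat.factorial n := by
          rw [Nat.factorial_succ]; push_cast; ring
      _ ≤ dIdx μ (n + 1) * dFact μ n := by
          apply mul_le_mul h1 ih hf (le_trans (by positivity) h1)
      _ = dFact μ (n+1) := rfl

lemma dFact_pos (μ : ℝ) (hμ : 0 ≤ μ) (n : ℕ) : 0 < dFact μ n :=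
  lt_of_lt_of_le (by positivity) (factorial_le_dFact μ hμ n)

/-- The main double-indexed family. -/
noncomputable def F (μ x t : ℝ) (p : ℕ × ℕ) : ℝ :=
  (-1 : ℝ) ^ p.2 * (Nat.factorial (p.1 + p.2)) /
    ((Nat.factorial p.1) * (Nat.factorial p.2) * dFact μ (p.1 + p.2)) *
    (x / 2) ^ (p.1 + p.2) * t ^ p.1 * t⁻¹ ^ p.2

lemma summable_F (μ : ℝ) (hμ : 0 ≤ μ) (x t : ℝ) : Summable (F μ x t) := by
  apply Summable.of_norm
  have hs : Summable (fun p : ℕ × ℕ =>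
      (|x/2 * t| ^ p.1 / Nat.factorial p.1) * (|x/2 * t⁻¹| ^ p.2 / Nat.factorial p.2)) :=
    Summable.mul_of_nonneg (f := fun i : ℕ => |x/2 * t| ^ i / Nat.factorial i)
      (g := fun j : ℕ => |x/2 * t⁻¹| ^ j / Nat.factorial j)
      (Real.summable_pow_div_factorial _) (Real.summable_pow_div_factorial _)
      (fun i => by positivity) (fun j => by positivity)
  apply Summable.of_nonneg_of_le (fun p => norm_nonneg _) _ hs
  intro ⟨i, j⟩
  have hd := dFact_pos μ hμ (i + j)
  have hfd := factorial_le_dFact μ hμ (i + j)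
  have hi : (Nat.factorial i : ℝ) ≠ 0 := by positivity
  have hj : (Nat.factorial j : ℝ) ≠ 0 := by positivity
  have h2 : |(2:ℝ)| ≠ 0 := by norm_num
  have key : ‖F μ x t (i, j)‖ =
      (Nat.factorial (i+j) / dFact μ (i+j)) *
        ((|x/2 * t| ^ i / Nat.factorial i) * (|x/2 * t⁻¹| ^ j / Nat.factorial j)) := by
    simp only [F, Real.norm_eq_abs, abs_mul, abs_div, abs_pow, abs_neg, abs_one, one_pow,
      one_mul, Nat.abs_cast, abs_of_pos hd]
    rw [pow_add]
    field_simp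
    ring
  rw [key]
  have h1 : (Nat.factorial (i+j) : ℝ) / dFact μ (i+j) ≤ 1 := by
    rw [div_le_one hd]; exact hfd
  calc (Nat.factorial (i+j) / dFact μ (i+j)) *
        ((|x/2 * t| ^ i / Nat.factorial i) * (|x/2 * t⁻¹| ^ j / Nat.factorial j))
      ≤ 1 * ((|x/2 * t| ^ i / Nat.factorial i) * (|x/2 * t⁻¹| ^ j / Nat.factorial j)) := by
        apply mul_le_mul_of_nonneg_right h1 (by positivity)
    _ = (|x/2 * t| ^ i / Nat.factorial i) * (|x/2 * t⁻¹| ^ j / Nat.factorial j) := one_mul _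

/-- Equiv regrouping `ℕ × ℕ` by the difference of the coordinates. -/
def eZ : ℤ × ℕ ≃ ℕ × ℕ where
  toFun p := (p.2 + p.1.toNat, p.2 + (-p.1).toNat)
  invFun q := ((q.1 : ℤ) - q.2, min q.1 q.2)
  left_inv := by
    rintro ⟨n, k⟩
    have h1 : ((k + n.toNat : ℕ) : ℤ) - ((k + (-n).toNat : ℕ) : ℤ) = n := by
      push_cast; omega
    have h2 : min (k + n.toNat) (k + (-n).toNat) = k := by omega
    simp only [Prod.mk.injEq]
    exact ⟨h1, h2⟩
  right_inv := by
    rintro ⟨i, j⟩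
    simp only [Prod.mk.injEq]
    constructor <;> omega

set_option maxHeartbeats 1000000 in
/-- The generating function identity `E_μ((x/2)(t - 1/t)) = Σ_{n ∈ ℤ} J_n^μ(x) t^n`. -/
theorem Jmu_generating (μ : ℝ) (hμ : 0 ≤ μ) (x t : ℝ) (ht : t ≠ 0) :
    Emu μ (x / 2 * (t - 1 / t)) = ∑' n : ℤ, JmuZ μ n x * t ^ n := by
  have hF := summable_F μ hμ x t
  -- Step 1 : LHS equals the double sum of F
  have lhs_eq : Emu μ (x / 2 * (t - 1 / t)) = ∑' p : ℕ × ℕ, F μ x t p := by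
    have hterm : ∀ m : ℕ, (x / 2 * (t - 1 / t)) ^ m / dFact μ m =
        ∑ kl ∈ Finset.HasAntidiagonal.antidiagonal m, F μ x t kl := by
      intro m
      have hy : x / 2 * (t - 1 / t) = (x / 2 * t) + (-(x / 2 * t⁻¹)) := by
        field_simp; ring
      rw [hy, (Commute.all _ _).add_pow', Finset.sum_div]
      apply Finset.sum_congr rfl
      rintro ⟨k, l⟩ hkl
      rw [Finset.HasAntidiagonal.mem_antidiagonal] at hkl
      simp only [] at hkl
      subst hkl
      have hkm : k ≤ k + l := by omega
      have hml : k + l - k = l := by omega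
      have hc : (((k + l).choose k : ℕ) : ℝ) = (k + l).factorial /
          (k.factorial * l.factorial) := by
        rw [Nat.cast_choose ℝ hkm, hml]
      have hd := dFact_pos μ hμ (k + l)
      have hkf : (k.factorial : ℝ) ≠ 0 := by positivity
      have hlf : (l.factorial : ℝ) ≠ 0 := by positivity
      simp only [F, nsmul_eq_mul]
      rw [hc, neg_pow (x / 2 * t⁻¹) l, pow_add (x / 2) k l, mul_pow, mul_pow]
      field_simp
    have hsig : Summable fun q : Σ n : ℕ, Finset.HasAntidiagonal.antidiagonal n => F μ x t (q.2 : ℕ × ℕ) :=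
      Finset.HasAntidiagonal.sigmaAntidiagonalEquivProd.summable_iff.mpr hF
    calc Emu μ (x / 2 * (t - 1 / t))
        = ∑' m : ℕ, ∑ kl ∈ Finset.HasAntidiagonal.antidiagonal m, F μ x t kl := by
          rw [Emu]; exact tsum_congr hterm
      _ = ∑' (m : ℕ) (kl : Finset.HasAntidiagonal.antidiagonal m), F μ x t (kl : ℕ × ℕ) := by
          apply tsum_congr; intro m
          rw [← Finset.sum_finset_coe, tsum_fintype]
          rfl
      _ = ∑' q : Σ n : ℕ, Finset.HasAntidiagonal.antidiagonal n, F μ x t (q.2 : ℕ × ℕ) :=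
          (Summable.tsum_sigma' (fun m => (hasSum_fintype _).summable) hsig).symm
      _ = ∑' p : ℕ × ℕ, F μ x t p := Finset.HasAntidiagonal.sigmaAntidiagonalEquivProd.tsum_eq _
  -- Step 2 : regroup over ℤ
  have hFe : Summable (F μ x t ∘ eZ) := eZ.summable_iff.mpr hF
  have fib : ∀ n : ℤ, (∑' k : ℕ, F μ x t (eZ (n, k))) = JmuZ μ n x * t ^ n := by
    intro n
    by_cases hn : 0 ≤ n
    · set N := n.toNat with hN
      have hneg : (-n).toNat = 0 := by omega
      have hterm : ∀ k : ℕ, F μ x t (eZ (n, k)) =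
          ((-1 : ℝ) ^ k * (Nat.factorial (2 * k + N)) /
            ((Nat.factorial k) * (Nat.factorial (k + N)) * dFact μ (2 * k + N)) *
            (x / 2) ^ (2 * k + N)) * t ^ N := by
        intro k
        have he : eZ (n, k) = (k + N, k) := by
          simp only [eZ, Equiv.coe_fn_mk, hneg, add_zero, ← hN]
        rw [he]
        have hidx : (k + N) + k = 2 * k + N := by omega
        simp only [F, hidx]
        have htt : t ^ (k + N) * t⁻¹ ^ k = t ^ N := by
          rw [pow_add, mul_comm (t ^ k) (t ^ N), mul_assoc, ← mul_pow,
            mul_inv_cancel₀ ht, one_pow, mul_one]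
        rw [mul_assoc _ (t ^ (k + N)) (t⁻¹ ^ k), htt]
        ring
      rw [tsum_congr hterm, tsum_mul_right]
      have ht1 : t ^ n = t ^ N := by
        rw [← Int.toNat_of_nonneg hn, ← hN, zpow_natCast]
      rw [ht1, JmuZ, if_pos hn, Jmu, ← hN]
    · set N := (-n).toNat with hN
      have hpos : n.toNat = 0 := by omega
      have hterm : ∀ k : ℕ, F μ x t (eZ (n, k)) =
          ((-1 : ℝ) ^ k * (Nat.factorial (2 * k + N)) /
            ((Nat.factorial k) * (Nat.factorial (k + N)) * dFact μ (2 * k + N)) *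
            (x / 2) ^ (2 * k + N)) * ((-1 : ℝ) ^ N * t⁻¹ ^ N) := by
        intro k
        have he : eZ (n, k) = (k, k + N) := by
          simp only [eZ, Equiv.coe_fn_mk, hpos, add_zero, ← hN]
        rw [he]
        have hidx : k + (k + N) = 2 * k + N := by omega
        simp only [F, hidx]
        have htt : t ^ k * t⁻¹ ^ (k + N) = t⁻¹ ^ N := by
          rw [pow_add, ← mul_assoc, ← mul_pow, mul_inv_cancel₀ ht, one_pow, one_mul]
        rw [mul_assoc _ (t ^ k) _, htt, pow_add (-1 : ℝ) k N]
        ring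
      rw [tsum_congr hterm, tsum_mul_right]
      have ht1 : t ^ n = t⁻¹ ^ N := by
        have : n = -(N : ℤ) := by omega
        rw [this, zpow_neg, zpow_natCast, inv_pow]
      rw [ht1, JmuZ, if_neg hn, Jmu, ← hN]
      ring
  calc Emu μ (x / 2 * (t - 1 / t)) = ∑' p : ℕ × ℕ, F μ x t p := lhs_eq
    _ = ∑' q : ℤ × ℕ, F μ x t (eZ q) := (eZ.tsum_eq _).symm
    _ = ∑' (n : ℤ) (k : ℕ), F μ x t (eZ (n, k)) := Summable.tsum_prod hFe
    _ = ∑' n : ℤ, JmuZ μ n x * t ^ n := tsum_congr fib
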